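/- arXiv:2510.20382 — 2 statements merged into one kernel-verified Lean document; each statement's English description precedes it below -/
import Mathlib

section
/- Every rooted tree with n' ≥ 2 vertices in which every vertex has at most 2 children contains at least n'/4 pairwise disjoint pairs {v, w} of vertices such that w is the parent of v and v is either a leaf or has exactly one child. -/
open Relation

namespace Stmt4Aux

variable {V : Type}

/-- the set of children of `x`. -/
def kids (parent : V → Option V) (x : V) : Set V := {u : V | parent u = some x}

lemma mem_kids {parent : V → Option V} {x c : V} : c ∈ kids parent x ↔ parent c = some x :=
  Iff.rfl

open scoped Classical in
/-- parent function restricted to the complement of a "removed" set `R`. -/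
noncomputable def Restrict (parent : V → Option V) (R : Set V)
    (hclose : ∀ x p, x ∉ R → parent x = some p → p ∉ R) :
    {x : V // x ∉ R} → Option {x : V // x ∉ R} := fun x =>
  if h : ∃ y : {x : V // x ∉ R}, parent x.1 = some y.1 then some h.choose else none

lemma restrict_eq_some (parent : V → Option V) (R : Set V)
    (hclose : ∀ x p, x ∉ R → parent x = some p → p ∉ R)
    (x y : {x : V // x ∉ R}) :
    Restrict parent R hclose x = some y ↔ parent x.1 = some y.1 := by
  unfold Restrict
  by_cases h : ∃ y : {x : V // x ∉ R}, parent x.1 = some y.1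
  · rw [dif_pos h]
    have hs := h.choose_spec
    constructor
    · rintro he
      have : h.choose = y := by injection he
      rwa [this] at hs
    · intro h2
      have : h.choose = y := Subtype.ext (by rw [hs] at h2; injection h2)
      rw [this]
  · rw [dif_neg h]
    constructor
    · intro he; exact absurd he (by simp)
    · intro h2; exact absurd ⟨y, h2⟩ h

lemma restrict_eq_none (parent : V → Option V) (R : Set V)
    (hclose : ∀ x p, x ∉ R → parent x = some p → p ∉ R)
    (x : {x : V // x ∉ R}) :
    Restrict parent R hclose x = none ↔ parent x.1 = none := by
  unfold Restrict
  by_cases h : ∃ y : {x : V // x ∉ R}, parent x.1 = some y.1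
  · rw [dif_pos h]
    have hs := h.choose_spec
    constructor
    · intro he; exact absurd he (by simp)
    · intro h2; exact absurd (hs.symm.trans h2) (by simp)
  · rw [dif_neg h]
    simp only [true_iff]
    cases hx : parent x.1 with
    | none => rfl
    | some p => exact absurd ⟨⟨p, hclose x.1 p x.2 hx⟩, hx⟩ h

section Step

variable [Fintype V] (parent : V → Option V) (extra : V → ℕ) (R : Set V)
  (hclose : ∀ x p, x ∉ R → parent x = some p → p ∉ R)

/-- new extra counts after removing `R`. -/
noncomputable def extra' : {x : V // x ∉ R} → ℕ := fun u =>
  extra u.1 + ((kids parent u.1) ∩ R).ncard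

lemma kids_restrict (u : {x : V // x ∉ R}) :
    (kids (Restrict parent R hclose) u).ncard = ((kids parent u.1) \ R).ncard := by
  rw [← Nat.card_coe_set_eq, ← Nat.card_coe_set_eq]
  apply Nat.card_congr
  refine
    { toFun := fun c => ⟨c.1.1, ⟨(restrict_eq_some parent R hclose c.1 u).mp c.2, c.1.2⟩⟩
      invFun := fun c => ⟨⟨c.1, c.2.2⟩, (restrict_eq_some parent R hclose ⟨c.1, c.2.2⟩ u).mpr c.2.1⟩
      left_inv := fun c => rfl
      right_inv := fun c => rfl }

lemma count_identity (u : {x : V // x ∉ R}) :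
    (kids (Restrict parent R hclose) u).ncard + extra' parent extra R u
      = (kids parent u.1).ncard + extra u.1 := by
  unfold extra'
  rw [kids_restrict parent R hclose u]
  have := Set.ncard_inter_add_ncard_diff_eq_ncard (kids parent u.1) R (Set.toFinite _)
  omega

lemma wf_restrict (hwf : WellFounded (fun a b : V => parent a = some b)) :
    WellFounded (fun a b : {x : V // x ∉ R} => Restrict parent R hclose a = some b) := by
  have hsub : Subrelation (fun a b : {x : V // x ∉ R} => Restrict parent R hclose a = some b)
      (InvImage (fun a b : V => parent a = some b) Subtype.val) := by
    intro a b h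
    exact (restrict_eq_some parent R hclose a b).mp h
  exact Subrelation.wf hsub (InvImage.wf _ hwf)

lemma card_restrict : Nat.card {x : V // x ∉ R} + R.ncard = Nat.card V := by
  classical
  rw [← Nat.card_coe_set_eq]
  rw [← Nat.card_congr (Equiv.sumCompl (· ∈ R)), Nat.card_sum]
  ring

lemma guard_restrict
    (hguard : ∀ u : V, parent u = none → kids parent u = ∅ → 1 ≤ extra u)
    (u : {x : V // x ∉ R}) (hnone : Restrict parent R hclose u = none)
    (hk : kids (Restrict parent R hclose) u = ∅) : 1 ≤ extra' parent extra R u := by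
  have hp : parent u.1 = none := (restrict_eq_none parent R hclose u).mp hnone
  have hdiff : (kids parent u.1 \ R).ncard = 0 := by
    rw [← kids_restrict parent R hclose u, hk, Set.ncard_empty]
  have hdiff2 : kids parent u.1 \ R = ∅ :=
    ((Set.ncard_eq_zero (Set.toFinite _)).mp hdiff)
  by_cases hke : kids parent u.1 = ∅
  · have := hguard u.1 hp hke
    unfold extra'
    omega
  · have hne : (kids parent u.1 ∩ R).Nonempty := by
      obtain ⟨c, hc⟩ := Set.nonempty_iff_ne_empty.mpr hke
      refine ⟨c, hc, ?_⟩
      by_contra hcR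
      exact absurd (Set.mem_diff_of_mem hc hcR) (hdiff2 ▸ id)
    have := Set.ncard_pos (Set.toFinite _) |>.mpr hne
    unfold extra'
    omega

lemma sum_split (g : V → ℕ) [Fintype {x : V // x ∉ R}] [DecidablePred (· ∈ R)] :
    ∑ u : {x : V // x ∉ R}, g u.1 + ∑ x ∈ Finset.univ.filter (· ∈ R), g x = ∑ x : V, g x := by
  classical
  rw [← Finset.sum_filter_add_sum_filter_not Finset.univ (· ∈ R) g]
  have h1 : ∑ u : {x : V // x ∉ R}, g u.1
      = ∑ x ∈ Finset.univ.filter (fun x => x ∉ R), g x :=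
    (Finset.sum_subtype (p := fun x => x ∉ R) _ (by simp) g).symm
  rw [h1]
  ring

lemma boundary_sum [Fintype {x : V // x ∉ R}] (t : V) (htR : t ∈ R)
    (hbnd : ∀ c ∈ R, ∀ p, parent c = some p → p ∉ R → c = t) :
    ∑ u : {x : V // x ∉ R}, ((kids parent u.1) ∩ R).ncard ≤ 1 := by
  classical
  have hzero : ∀ u : {x : V // x ∉ R}, ¬ parent t = some u.1 →
      (kids parent u.1 ∩ R).ncard = 0 := by
    intro u hu
    rw [Set.ncard_eq_zero (Set.toFinite _)]
    ext c
    simp only [Set.mem_inter_iff, Set.mem_empty_iff_false, iff_false, not_and]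
    intro hc hcR
    have : c = t := hbnd c hcR u.1 hc u.2
    exact hu (this ▸ hc)
  cases hpt : parent t with
  | none =>
    have : ∀ u : {x : V // x ∉ R}, (kids parent u.1 ∩ R).ncard = 0 := fun u =>
      hzero u (by simp [hpt])
    simp [this]
  | some p =>
    by_cases hpR : p ∈ R
    · have : ∀ u : {x : V // x ∉ R}, (kids parent u.1 ∩ R).ncard = 0 := by
        intro u
        apply hzero u
        intro hc
        rw [hpt] at hc
        injection hc with hc
        exact u.2 (hc ▸ hpR)
      simp [this]
    · rw [Finset.sum_eq_single (⟨p, hpR⟩ : {x : V // x ∉ R})]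
      · calc (kids parent p ∩ R).ncard ≤ ({t} : Set V).ncard := by
              apply Set.ncard_le_ncard _ (Set.finite_singleton t)
              intro c hc
              exact hbnd c hc.2 p hc.1 hpR
            _ = 1 := Set.ncard_singleton t
      · intro b _ hb
        apply hzero b
        intro hc
        rw [hpt] at hc
        injection hc with hc
        exact hb (Subtype.ext hc.symm)
      · intro h; exact absurd (Finset.mem_univ _) h

end Step

section Lift

variable [Fintype V] (parent : V → Option V) (extra : V → ℕ) (R : Set V)
  (hclose : ∀ x p, x ∉ R → parent x = some p → p ∉ R)

lemma lift_good (P' : Finset ({x : V // x ∉ R} × {x : V // x ∉ R}))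
    (h1 : ∀ p ∈ P', Restrict parent R hclose p.1 = some p.2 ∧
      (kids (Restrict parent R hclose) p.1).ncard + extra' parent extra R p.1 ≤ 1)
    (h2 : ∀ p ∈ P', ∀ q ∈ P', p ≠ q → p.1 ≠ q.1 ∧ p.1 ≠ q.2 ∧ p.2 ≠ q.1 ∧ p.2 ≠ q.2) :
    ∃ P₀ : Finset (V × V), P₀.card = P'.card ∧ (∀ q ∈ P₀, q.1 ∉ R ∧ q.2 ∉ R) ∧
      (∀ p ∈ P₀, parent p.1 = some p.2 ∧ (kids parent p.1).ncard + extra p.1 ≤ 1) ∧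
      (∀ p ∈ P₀, ∀ q ∈ P₀, p ≠ q → p.1 ≠ q.1 ∧ p.1 ≠ q.2 ∧ p.2 ≠ q.1 ∧ p.2 ≠ q.2) := by
  classical
  have hinj : Function.Injective
      (fun p : {x : V // x ∉ R} × {x : V // x ∉ R} => ((p.1.1, p.2.1) : V × V)) := by
    intro p q h
    simp only [Prod.mk.injEq] at h
    exact Prod.ext (Subtype.ext h.1) (Subtype.ext h.2)
  refine ⟨P'.image (fun p => (p.1.1, p.2.1)), Finset.card_image_of_injective _ hinj, ?_, ?_, ?_⟩
  · intro q hq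
    obtain ⟨q', _, rfl⟩ := Finset.mem_image.mp hq
    exact ⟨q'.1.2, q'.2.2⟩
  · intro p hp
    obtain ⟨p', hp', rfl⟩ := Finset.mem_image.mp hp
    obtain ⟨ha, hb⟩ := h1 p' hp'
    refine ⟨(restrict_eq_some parent R hclose p'.1 p'.2).mp ha, ?_⟩
    have := count_identity parent extra R hclose p'.1
    show (kids parent p'.1.1).ncard + extra p'.1.1 ≤ 1
    omega
  · intro p hp q hq hpq
    obtain ⟨p', hp', rfl⟩ := Finset.mem_image.mp hp
    obtain ⟨q', hq', rfl⟩ := Finset.mem_image.mp hq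
    have hne : p' ≠ q' := fun h => hpq (by rw [h])
    obtain ⟨d1, d2, d3, d4⟩ := h2 p' hp' q' hq' hne
    exact ⟨fun h => d1 (Subtype.ext h), fun h => d2 (Subtype.ext h),
      fun h => d3 (Subtype.ext h), fun h => d4 (Subtype.ext h)⟩

end Lift

theorem aux (n : ℕ) : ∀ (V : Type) (instV : Fintype V) (parent : V → Option V) (extra : V → ℕ),
    Fintype.card V = n →
    WellFounded (fun a b : V => parent a = some b) →
    (∀ v : V, (kids parent v).ncard + extra v ≤ 2) →
    (∀ u : V, parent u = none → kids parent u = ∅ → 1 ≤ extra u) →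
    ∃ P : Finset (V × V),
      (∀ p ∈ P, parent p.1 = some p.2 ∧ (kids parent p.1).ncard + extra p.1 ≤ 1) ∧
      (∀ p ∈ P, ∀ q ∈ P, p ≠ q → p.1 ≠ q.1 ∧ p.1 ≠ q.2 ∧ p.2 ≠ q.1 ∧ p.2 ≠ q.2) ∧
      Fintype.card V ≤ 4 * P.card + ∑ v : V, extra v := by
  induction n using Nat.strong_induction_on with
  | _ n IH =>
  intro V instV parent extra hcard hwf hdeg hguard
  classical
  by_cases hS : ∃ w : V, ∃ c : V, parent c = some w
  case neg =>
    refine ⟨∅, by simp, by simp, ?_⟩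
    have hone : ∀ v : V, 1 ≤ extra v := by
      intro v
      apply hguard v
      · cases hv : parent v with
        | none => rfl
        | some p => exact absurd ⟨p, v, hv⟩ hS
      · ext c
        simp only [mem_kids, Set.mem_empty_iff_false, iff_false]
        intro hc; exact hS ⟨v, c, hc⟩
    calc Fintype.card V = ∑ _v : V, 1 := by simp
      _ ≤ ∑ v : V, extra v := Finset.sum_le_sum (fun v _ => hone v)
      _ ≤ 4 * (∅ : Finset (V × V)).card + ∑ v : V, extra v := by simp
  case pos =>
    -- basic consequences of well-foundedness
    have hirr : ∀ a : V, ¬ parent a = some a := fun a h => (hwf.isIrrefl).irrefl a h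
    have hcyc : ∀ a b : V, parent a = some b → parent b = some a → False := by
      intro a b h1 h2
      exact (hwf.transGen.isIrrefl).irrefl a (TransGen.head h1 (TransGen.single h2))
    -- a vertex all of whose children are childless
    set S : Set V := {w : V | ∃ c, parent c = some w} with hSdef
    have hSne : S.Nonempty := by
      obtain ⟨w, c, hc⟩ := hS
      exact ⟨w, c, hc⟩
    set w : V := hwf.min S hSne with hwdef
    have hwS : w ∈ S := hwf.min_mem S hSne
    have hchl : ∀ b : V, parent b = some w → kids parent b = ∅ := by
      intro b hb
      ext c
      simp only [mem_kids, Set.mem_empty_iff_false, iff_false]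
      intro hc
      exact hwf.not_lt_min S (⟨c, hc⟩ : b ∈ S) hb
    obtain ⟨c₀, hc₀⟩ := hwS
    by_cases hA : ∃ v : V, parent v = some w ∧ extra v ≤ 1
    · -- CASE A : some child of w has extra ≤ 1; remove w with all its children,
      -- pair (v, w)
      obtain ⟨v, hvw, hev⟩ := hA
      set R : Set V := insert w (kids parent w) with hRdef
      have hwR : w ∈ R := Set.mem_insert _ _
      have hvkid : v ∈ kids parent w := hvw
      have hvR : v ∈ R := Set.mem_insert_of_mem _ hvkid
      have hvwne : v ≠ w := fun h => hirr w (h ▸ hvw)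
      have hclose : ∀ x p, x ∉ R → parent x = some p → p ∉ R := by
        intro x p hx hp hpR
        rcases Set.mem_insert_iff.mp hpR with rfl | hpk
        · exact hx (Set.mem_insert_of_mem _ hp)
        · have : kids parent p = ∅ := hchl p hpk
          exact absurd (mem_kids.mpr hp) (by rw [this]; exact id)
      have hbnd : ∀ c ∈ R, ∀ p, parent c = some p → p ∉ R → c = w := by
        intro c hc p hp hpR
        rcases Set.mem_insert_iff.mp hc with rfl | hck
        · rfl
        · have : p = w := by
            have := mem_kids.mp hck
            rw [this] at hp; injection hp with hp; exact hp.symm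
          exact absurd (this ▸ hwR) hpR
      -- cardinalities of R
      have hRfin : R.Finite := Set.toFinite _
      have hRub : R.ncard ≤ 3 := by
        have h1 : R.ncard ≤ (kids parent w).ncard + 1 := Set.ncard_insert_le _ _
        have h2 := hdeg w
        omega
      have hRlb : 2 ≤ R.ncard := by
        have hsub : ({v, w} : Set V) ⊆ R := by
          intro x hx
          rcases hx with rfl | rfl
          · exact hvR
          · exact hwR
        calc 2 = ({v, w} : Set V).ncard := (Set.ncard_pair hvwne).symm
          _ ≤ R.ncard := Set.ncard_le_ncard hsub hRfin
      haveI instV' : Fintype {x : V // x ∉ R} := Fintype.ofFinite _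
      have hcV : Fintype.card {x : V // x ∉ R} + R.ncard = Fintype.card V := by
        have := card_restrict (V := V) R
        rwa [Nat.card_eq_fintype_card, Nat.card_eq_fintype_card] at this
      have hlt : Fintype.card {x : V // x ∉ R} < n := by omega
      have hdeg' : ∀ u : {x : V // x ∉ R},
          (kids (Restrict parent R hclose) u).ncard + extra' parent extra R u ≤ 2 := by
        intro u
        have h1 := count_identity parent extra R hclose u
        have h2 := hdeg u.1
        omega
      obtain ⟨P', h1', h2', h3'⟩ := IH (Fintype.card {x : V // x ∉ R}) hlt
        {x : V // x ∉ R} instV' (Restrict parent R hclose) (extra' parent extra R) rfl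
        (wf_restrict parent R hclose hwf) hdeg'
        (guard_restrict parent extra R hclose hguard)
      obtain ⟨P₀, hcard₀, hcoords, hcand, hdisj⟩ :=
        lift_good parent extra R hclose P' h1' h2'
      have hvwP₀ : (v, w) ∉ P₀ := fun h => (hcoords (v, w) h).1 hvR
      refine ⟨insert (v, w) P₀, ?_, ?_, ?_⟩
      · intro p hp
        rcases Finset.mem_insert.mp hp with rfl | hp
        · refine ⟨hvw, ?_⟩
          show (kids parent v).ncard + extra v ≤ 1
          have h0 : kids parent v = ∅ := hchl v hvw
          rw [h0, Set.ncard_empty]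
          omega
        · exact hcand p hp
      · intro p hp q hq hpq
        rcases Finset.mem_insert.mp hp with rfl | hp <;>
          rcases Finset.mem_insert.mp hq with rfl | hq
        · exact absurd rfl hpq
        · obtain ⟨hq1, hq2⟩ := hcoords q hq
          exact ⟨fun h => hq1 (h ▸ hvR), fun h => hq2 (h ▸ hvR),
            fun h => hq1 (h ▸ hwR), fun h => hq2 (h ▸ hwR)⟩
        · obtain ⟨hp1, hp2⟩ := hcoords p hp
          exact ⟨fun h => hp1 (h.symm ▸ hvR), fun h => hp1 (h.symm ▸ hwR),
            fun h => hp2 (h.symm ▸ hvR), fun h => hp2 (h.symm ▸ hwR)⟩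
        · exact hdisj p hp q hq hpq
      · -- counting
        have hcardP : (insert (v, w) P₀).card = P'.card + 1 := by
          rw [Finset.card_insert_of_notMem hvwP₀, hcard₀]
        have hsum : ∑ u : {x : V // x ∉ R}, extra' parent extra R u
            = ∑ u : {x : V // x ∉ R}, extra u.1
              + ∑ u : {x : V // x ∉ R}, ((kids parent u.1) ∩ R).ncard := by
          unfold extra'
          rw [Finset.sum_add_distrib]
        have hbd := boundary_sum parent R w hwR hbnd
        have hsp := sum_split (V := V) R extra
        rw [hcardP]
        omega
    · -- CASE B : every child of w has extra ≥ 2; remove the child c₀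
      push_neg at hA
      have hev : 2 ≤ extra c₀ := by
        have := hA c₀ hc₀
        omega
      have hc₀kids : kids parent c₀ = ∅ := hchl c₀ hc₀
      set R : Set V := {c₀} with hRdef
      have hc₀R : c₀ ∈ R := rfl
      have hclose : ∀ x p, x ∉ R → parent x = some p → p ∉ R := by
        intro x p hx hp hpR
        have : p = c₀ := hpR
        subst this
        exact absurd (mem_kids.mpr hp) (by rw [hc₀kids]; exact id)
      have hbnd : ∀ c ∈ R, ∀ p, parent c = some p → p ∉ R → c = c₀ := by
        intro c hc _ _ _
        exact hc
      haveI instV' : Fintype {x : V // x ∉ R} := Fintype.ofFinite _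
      have hcV : Fintype.card {x : V // x ∉ R} + R.ncard = Fintype.card V := by
        have := card_restrict (V := V) R
        rwa [Nat.card_eq_fintype_card, Nat.card_eq_fintype_card] at this
      have hR1 : R.ncard = 1 := Set.ncard_singleton c₀
      have hlt : Fintype.card {x : V // x ∉ R} < n := by omega
      have hdeg' : ∀ u : {x : V // x ∉ R},
          (kids (Restrict parent R hclose) u).ncard + extra' parent extra R u ≤ 2 := by
        intro u
        have h1 := count_identity parent extra R hclose u
        have h2 := hdeg u.1
        omega
      obtain ⟨P', h1', h2', h3'⟩ := IH (Fintype.card {x : V // x ∉ R}) hlt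
        {x : V // x ∉ R} instV' (Restrict parent R hclose) (extra' parent extra R) rfl
        (wf_restrict parent R hclose hwf) hdeg'
        (guard_restrict parent extra R hclose hguard)
      obtain ⟨P₀, hcard₀, hcoords, hcand, hdisj⟩ :=
        lift_good parent extra R hclose P' h1' h2'
      refine ⟨P₀, hcand, hdisj, ?_⟩
      have hsum : ∑ u : {x : V // x ∉ R}, extra' parent extra R u
          = ∑ u : {x : V // x ∉ R}, extra u.1
            + ∑ u : {x : V // x ∉ R}, ((kids parent u.1) ∩ R).ncard := by
        unfold extra'
        rw [Finset.sum_add_distrib]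
      have hbd := boundary_sum parent R c₀ hc₀R hbnd
      have hsp := sum_split (V := V) R extra
      have hfilter : ∑ x ∈ Finset.univ.filter (· ∈ R), extra x = extra c₀ := by
        have : Finset.univ.filter (· ∈ R) = {c₀} := by
          ext x
          simp [hRdef]
        rw [this, Finset.sum_singleton]
      rw [hcard₀]
      omega

end Stmt4Aux

/-- Every rooted tree with `n' ≥ 2` vertices in which every vertex has at most two children
contains at least `n'/4` pairwise disjoint pairs `(v, w)` where `w` is the parent of `v`
and `v` is a leaf or has exactly one child. -/
theorem stmt4 {V : Type} [Fintype V] (parent : V → Option V)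
    (hwf : WellFounded (fun a b : V => parent a = some b))
    (hroot : ∃! r : V, parent r = none)
    (hdeg : ∀ v : V, {u : V | parent u = some v}.ncard ≤ 2)
    (hn : 2 ≤ Fintype.card V) :
    ∃ P : Finset (V × V),
      (∀ p ∈ P, parent p.1 = some p.2 ∧ {u : V | parent u = some p.1}.ncard ≤ 1) ∧
      (∀ p ∈ P, ∀ q ∈ P, p ≠ q →
        p.1 ≠ q.1 ∧ p.1 ≠ q.2 ∧ p.2 ≠ q.1 ∧ p.2 ≠ q.2) ∧
      Fintype.card V ≤ 4 * P.card := by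
  classical
  have hguard : ∀ u : V, parent u = none → Stmt4Aux.kids parent u = ∅ → 1 ≤ (0 : ℕ) := by
    intro u hu hku
    exfalso
    obtain ⟨r, hr, hun⟩ := hroot
    have hur : u = r := hun u hu
    -- the reversed relation is well-founded on a finite type
    have hwfq : WellFounded (fun a b : V => parent b = some a) := by
      set s : V → V → Prop :=
        fun a b => Relation.TransGen (fun x y : V => parent x = some y) b a with hsdef
      haveI : IsTrans V s := ⟨fun a b c hab hbc => Relation.TransGen.trans hbc hab⟩
      haveI : IsIrrefl V s := ⟨fun a h => (hwf.transGen.isIrrefl).irrefl a h⟩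
      have hsub : Subrelation (fun a b : V => parent b = some a) s := by
        intro a b h
        exact Relation.TransGen.single h
      exact Subrelation.wf hsub (Finite.wellFounded_of_trans_of_irrefl s)
    have hall : ∀ x : V, x = u := by
      intro x
      induction x using hwfq.induction with
      | _ x ihx =>
        cases hx : parent x with
        | none => rw [hun x hx, hur]
        | some y =>
          have hyu : y = u := ihx y hx
          rw [hyu] at hx
          exact absurd (Stmt4Aux.mem_kids.mpr hx) (by rw [hku]; exact id)
    have : Fintype.card V ≤ 1 :=
      Fintype.card_le_one_iff.mpr fun a b => (hall a).trans (hall b).symm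
    omega
  obtain ⟨P, h1, h2, h3⟩ := Stmt4Aux.aux (Fintype.card V) V inferInstance parent
    (fun _ => 0) rfl hwf (by intro v; simpa [Stmt4Aux.kids] using hdeg v) hguard
  refine ⟨P, ?_, h2, ?_⟩
  · intro p hp
    obtain ⟨ha, hb⟩ := h1 p hp
    exact ⟨ha, by simpa [Stmt4Aux.kids] using hb⟩
  · simpa using h3
end

section
/- For every k ≥ 2 and every n ≥ 1, the number of permutations of length n avoiding the decreasing pattern (k, k−1, ..., 1) is at most (k−1)^{2n}. -/
/-- Permutation pattern containment. -/
def Contains {n k : ℕ} (τ : Equiv.Perm (Fin n)) (π : Equiv.Perm (Fin k)) : Prop :=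
  ∃ f : Fin k → Fin n, StrictMono f ∧ ∀ j l : Fin k, π j < π l ↔ τ (f j) < τ (f l)


def dlen {n : ℕ} (τ : Equiv.Perm (Fin n)) (i : Fin n) : ℕ :=
  ((Finset.univ.filter (fun j => j < i ∧ τ i < τ j)).attach.sup
    (fun j => dlen τ j.1)) + 1
termination_by i.val
decreasing_by
  have := j.2
  simp only [Finset.mem_filter] at this
  exact this.2.1

lemma dlen_pos {n : ℕ} (τ : Equiv.Perm (Fin n)) (i : Fin n) : 1 ≤ dlen τ i := by
  rw [dlen]; omega

lemma dlen_lt_dlen {n : ℕ} (τ : Equiv.Perm (Fin n)) {i j : Fin n}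
    (h1 : j < i) (h2 : τ i < τ j) : dlen τ j < dlen τ i := by
  have hj : j ∈ Finset.univ.filter (fun j => j < i ∧ τ i < τ j) := by
    simp [h1, h2]
  have := Finset.le_sup (f := fun j : {x // x ∈ Finset.univ.filter (fun j => j < i ∧ τ i < τ j)} => dlen τ j.1)
    (Finset.mem_attach _ ⟨j, hj⟩)
  conv_rhs => rw [dlen]
  exact Nat.lt_succ_of_le this

lemma mono_of_dlen_eq {n : ℕ} (τ : Equiv.Perm (Fin n)) {i j : Fin n}
    (h1 : i < j) (h2 : dlen τ i = dlen τ j) : τ i < τ j := by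
  rcases lt_trichotomy (τ i) (τ j) with h | h | h
  · exact h
  · exact absurd (τ.injective h) (ne_of_lt h1)
  · exact absurd (dlen_lt_dlen τ h1 h) (by omega)

lemma dlen_chain {n : ℕ} (τ : Equiv.Perm (Fin n)) (i : Fin n) :
    ∃ g : Fin (dlen τ i) → Fin n, StrictMono g ∧ (∀ a b, a < b → τ (g b) < τ (g a)) ∧
      ∀ x, g x ≤ i ∧ τ i ≤ τ (g x) := by
  have H : ∀ m : ℕ, ∀ i : Fin n, i.val < m →
      ∃ g : Fin (dlen τ i) → Fin n, StrictMono g ∧ (∀ a b, a < b → τ (g b) < τ (g a)) ∧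
        ∀ x, g x ≤ i ∧ τ i ≤ τ (g x) := by
    intro m
    induction m with
    | zero => intro i hi; omega
    | succ m ih =>
      intro i hi
      set s := Finset.univ.filter (fun j => j < i ∧ τ i < τ j) with hs
      rcases s.eq_empty_or_nonempty with he | hne
      · have hd : dlen τ i = 1 := by
          rw [dlen, ← hs, he]; simp
        refine ⟨fun _ => i, ?_, ?_, fun x => ⟨le_refl _, le_refl _⟩⟩
        · intro a b hab
          exfalso
          have ha := a.isLt; have hb := b.isLt
          omega
        · intro a b hab
          exfalso
          have ha := a.isLt; have hb := b.isLt
          omega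
      · obtain ⟨j', _, hsup⟩ := Finset.exists_mem_eq_sup s.attach
          (Finset.attach_nonempty_iff.2 hne) (fun j => dlen τ j.1)
        obtain ⟨j, hj⟩ := j'
        have hjm := hj
        rw [hs, Finset.mem_filter] at hjm
        obtain ⟨-, hji, hτ⟩ := hjm
        have hd : dlen τ i = dlen τ j + 1 := by
          rw [dlen, ← hs, hsup]
        obtain ⟨g, hg1, hg2, hg3⟩ := ih j (by omega)
        refine ⟨fun x => if h : (x : ℕ) < dlen τ j then g ⟨x, h⟩ else i, ?_, ?_, ?_⟩
        · intro a b hab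
          have hb : (b : ℕ) < dlen τ j + 1 := by have := b.isLt; omega
          by_cases hbv : (b : ℕ) < dlen τ j
          · have hav : (a : ℕ) < dlen τ j := by have : (a:ℕ) < (b:ℕ) := hab; omega
            simp only [dif_pos hav, dif_pos hbv]
            exact hg1 (show (⟨a, hav⟩ : Fin _) < ⟨b, hbv⟩ from hab)
          · by_cases hav : (a : ℕ) < dlen τ j
            · simp only [dif_pos hav, dif_neg hbv]
              exact lt_of_le_of_lt (hg3 ⟨a, hav⟩).1 hji
            · exfalso; have ha := a.isLt; omega
        · intro a b hab
          have hb : (b : ℕ) < dlen τ j + 1 := by have := b.isLt; omega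
          by_cases hbv : (b : ℕ) < dlen τ j
          · have hav : (a : ℕ) < dlen τ j := by have : (a:ℕ) < (b:ℕ) := hab; omega
            simp only [dif_pos hav, dif_pos hbv]
            exact hg2 _ _ (show (⟨a, hav⟩ : Fin _) < ⟨b, hbv⟩ from hab)
          · by_cases hav : (a : ℕ) < dlen τ j
            · simp only [dif_pos hav, dif_neg hbv]
              exact lt_of_lt_of_le hτ (hg3 ⟨a, hav⟩).2
            · exfalso; have ha := a.isLt; omega
        · intro x
          by_cases hxv : (x : ℕ) < dlen τ j
          · simp only [dif_pos hxv]
            exact ⟨le_of_lt (lt_of_le_of_lt (hg3 ⟨x, hxv⟩).1 hji),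
              le_of_lt (lt_of_lt_of_le hτ (hg3 ⟨x, hxv⟩).2)⟩
          · simp only [dif_neg hxv]
            exact ⟨le_refl _, le_refl _⟩
  exact H n i i.isLt

lemma dlen_le {n k : ℕ} (τ : Equiv.Perm (Fin n))
    (hτ : ¬ Contains τ (Fin.revPerm : Equiv.Perm (Fin k))) (i : Fin n) :
    dlen τ i ≤ k - 1 := by
  by_contra hcon
  have hpos := dlen_pos τ i
  have hk' : k ≤ dlen τ i := by omega
  obtain ⟨g, hg1, hg2, -⟩ := dlen_chain τ i
  apply hτ
  refine ⟨fun x => g (Fin.castLE hk' x), ?_, ?_⟩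
  · intro a b hab
    exact hg1 (show Fin.castLE hk' a < Fin.castLE hk' b from hab)
  · intro j l
    simp only [Fin.revPerm_apply]
    rw [Fin.rev_lt_rev]
    constructor
    · intro hlj
      exact hg2 _ _ (show Fin.castLE hk' l < Fin.castLE hk' j from hlj)
    · intro hτlt
      rcases lt_trichotomy l j with h | h | h
      · exact h
      · subst h; exact absurd hτlt (lt_irrefl _)
      · exact absurd (hg2 _ _ (show Fin.castLE hk' j < Fin.castLE hk' l from h))
          (by exact fun hh => absurd (hτlt.trans hh) (lt_irrefl _))

lemma perm_eq_of_dlen_eq {n : ℕ} (τ σ : Equiv.Perm (Fin n))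
    (h1 : ∀ i, dlen τ i = dlen σ i)
    (h2 : ∀ v, dlen τ (τ⁻¹ v) = dlen σ (σ⁻¹ v)) : τ = σ := by
  apply Equiv.ext
  intro i
  set c := dlen τ i with hc
  set A := Finset.univ.filter (fun x => dlen τ x = c) with hA
  set B := Finset.univ.filter (fun v => dlen τ (τ⁻¹ v) = c) with hB
  have hBA : B = A.image τ := by
    ext v
    simp only [hA, hB, Finset.mem_image, Finset.mem_filter, Finset.mem_univ, true_and]
    constructor
    · intro hv; exact ⟨τ⁻¹ v, hv, Equiv.apply_symm_apply τ v⟩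
    · rintro ⟨x, hx, rfl⟩; rwa [Equiv.Perm.inv_def, Equiv.symm_apply_apply]
  have hcard : B.card = A.card := by
    rw [hBA, Finset.card_image_of_injective _ τ.injective]
  set e := A.orderEmbOfFin (rfl : A.card = A.card) with he
  have hemem : ∀ x, e x ∈ A := fun x => A.orderEmbOfFin_mem rfl x
  have hdl : ∀ x, dlen τ (e x) = c := by
    intro x; exact (Finset.mem_filter.mp (hemem x)).2
  have hFmono : StrictMono (fun x => τ (e x)) := by
    intro x y hxy
    exact mono_of_dlen_eq τ (e.strictMono hxy) (by rw [hdl x, hdl y])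
  have hGmono : StrictMono (fun x => σ (e x)) := by
    intro x y hxy
    exact mono_of_dlen_eq σ (e.strictMono hxy) (by rw [← h1, ← h1, hdl x, hdl y])
  have hFmem : ∀ x, τ (e x) ∈ B := by
    intro x
    refine Finset.mem_filter.mpr ⟨Finset.mem_univ _, ?_⟩
    rw [Equiv.Perm.inv_def, Equiv.symm_apply_apply]; exact hdl x
  have hGmem : ∀ x, σ (e x) ∈ B := by
    intro x
    refine Finset.mem_filter.mpr ⟨Finset.mem_univ _, ?_⟩
    rw [h2, Equiv.Perm.inv_def σ, Equiv.symm_apply_apply, ← h1]; exact hdl x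
  have hF := Finset.orderEmbOfFin_unique hcard hFmem hFmono
  have hG := Finset.orderEmbOfFin_unique hcard hGmem hGmono
  have hFG : (fun x => τ (e x)) = fun x => σ (e x) := by rw [hF, hG]
  have hiA : i ∈ A := Finset.mem_filter.mpr ⟨Finset.mem_univ _, rfl⟩
  have : (i : Fin n) ∈ Set.range e := by
    rw [he, Finset.range_orderEmbOfFin]; exact hiA
  obtain ⟨x, hx⟩ := this
  have := congrFun hFG x
  simpa [hx] using this

/-- The number of permutations of length `n` avoiding the decreasing pattern of
length `k` is at most `(k-1)^(2n)`. -/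
theorem stmt13 {n k : ℕ} (hk : 2 ≤ k) (hn : 1 ≤ n) :
    {τ : Equiv.Perm (Fin n) | ¬ Contains τ (Fin.revPerm : Equiv.Perm (Fin k))}.ncard ≤
      (k - 1) ^ (2 * n) := by
  have hk1 : 0 < k - 1 := by omega
  set S := {τ : Equiv.Perm (Fin n) | ¬ Contains τ (Fin.revPerm : Equiv.Perm (Fin k))} with hS
  set Φ : Equiv.Perm (Fin n) → (Fin n → Fin (k-1)) × (Fin n → Fin (k-1)) :=
    fun τ => (fun i => ⟨(dlen τ i - 1) % (k-1), Nat.mod_lt _ hk1⟩,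
              fun v => ⟨(dlen τ (τ⁻¹ v) - 1) % (k-1), Nat.mod_lt _ hk1⟩) with hΦ
  have hinj : Set.InjOn Φ S := by
    intro τ hτ σ hσ h
    rw [hS, Set.mem_setOf_eq] at hτ hσ
    have key : ∀ (ρ : Equiv.Perm (Fin n)) (hρ : ¬ Contains ρ (Fin.revPerm : Equiv.Perm (Fin k)))
        (i : Fin n), (dlen ρ i - 1) % (k-1) = dlen ρ i - 1 :=
      fun ρ hρ i => Nat.mod_eq_of_lt (by have := dlen_le ρ hρ i; have := dlen_pos ρ i; omega)
    apply perm_eq_of_dlen_eq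
    · intro i
      have h1 := congrFun (congrArg Prod.fst h) i
      have h2 := congrArg Fin.val h1
      simp only [hΦ] at h2
      rw [key τ hτ, key σ hσ] at h2
      have := dlen_pos τ i; have := dlen_pos σ i
      omega
    · intro v
      have h1 := congrFun (congrArg Prod.snd h) v
      have h2 := congrArg Fin.val h1
      simp only [hΦ] at h2
      rw [key τ hτ, key σ hσ] at h2
      have := dlen_pos τ (τ⁻¹ v); have := dlen_pos σ (σ⁻¹ v)
      omega
  calc S.ncard = (Φ '' S).ncard := (Set.ncard_image_of_injOn hinj).symm
    _ ≤ (Set.univ : Set ((Fin n → Fin (k-1)) × (Fin n → Fin (k-1)))).ncard :=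
        Set.ncard_le_ncard (Set.subset_univ _) Set.finite_univ
    _ = Fintype.card ((Fin n → Fin (k-1)) × (Fin n → Fin (k-1))) := by
        rw [Set.ncard_univ, Nat.card_eq_fintype_card]
    _ = (k - 1) ^ (2 * n) := by
        simp [two_mul, pow_add]
end
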